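/- Let A be an m×m real matrix. The map F_A(x) = x + (Ax)^3 is proper if and only if the restriction of F̂_A(x) = x + A(x^3) to Im(A) is proper. -/

import Mathlib

open Filter Matrix

theorem stmt19 {m : ℕ} (A : Matrix (Fin m) (Fin m) ℝ) :
    (∀ K : Set (Fin m → ℝ), IsCompact K →
        IsCompact ((fun x => x + fun i => (A.mulVec x i) ^ 3) ⁻¹' K)) ↔
    (∀ K : Set (Fin m → ℝ), IsCompact K →
        IsCompact {x : Fin m → ℝ | x ∈ LinearMap.range A.mulVecLin ∧
          (x + A.mulVec fun i => (x i) ^ 3) ∈ K}) := by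
  classical
  have hTc : Continuous (fun x => A.mulVec x) := by
    have := LinearMap.continuous_of_finiteDimensional (𝕜 := ℝ) A.mulVecLin
    exact this
  have hF : Continuous (fun x : Fin m → ℝ => x + fun i => (A.mulVec x i) ^ 3) :=
    continuous_id.add (continuous_pi fun i => ((continuous_apply i).comp hTc).pow 3)
  have hG : Continuous (fun x : Fin m → ℝ => x + A.mulVec fun i => (x i) ^ 3) :=
    continuous_id.add (hTc.comp (continuous_pi fun i => (continuous_apply i).pow 3))
  have hcube : ∀ v : Fin m → ℝ, ‖(fun i => (v i) ^ 3 : Fin m → ℝ)‖ ≤ ‖v‖ ^ 3 := by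
    intro v
    refine (pi_norm_le_iff_of_nonneg (by positivity)).2 fun i => ?_
    calc ‖(v i) ^ 3‖ = ‖v i‖ ^ 3 := norm_pow _ _
      _ ≤ ‖v‖ ^ 3 := pow_le_pow_left₀ (norm_nonneg _) (norm_le_pi_norm v i) 3
  constructor
  · -- F_A proper → restriction proper
    intro h K hK
    rw [Metric.isCompact_iff_isClosed_bounded]
    constructor
    · exact ((LinearMap.range A.mulVecLin).closed_of_finiteDimensional).inter
        (hK.isClosed.preimage hG)
    · obtain ⟨p, hcompl⟩ := Submodule.exists_isCompl (LinearMap.ker A.mulVecLin)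
      set πk := (LinearMap.ker A.mulVecLin).linearProjOfIsCompl p hcompl with hπk
      set Tp : p →ₗ[ℝ] (Fin m → ℝ) := A.mulVecLin.domRestrict p with hTp
      have hker : LinearMap.ker Tp = ⊥ := by
        rw [LinearMap.ker_eq_bot']
        intro v hv
        have hv' : (v : Fin m → ℝ) ∈ LinearMap.ker A.mulVecLin := hv
        exact Subtype.ext (Submodule.disjoint_def.1 hcompl.disjoint v.1 hv' v.2)
      obtain ⟨c, hc0, hanti⟩ := LinearMap.exists_antilipschitzWith Tp hker
      obtain ⟨C0, hC0⟩ := hK.isBounded.exists_norm_le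
      set R : ℝ := max ((c : ℝ) * C0) 0 with hR
      obtain ⟨C2, hC2⟩ := (h (Metric.closedBall 0 R) (isCompact_closedBall _ _)).isBounded.exists_norm_le
      rw [isBounded_iff_forall_norm_le]
      set Tclm := LinearMap.toContinuousLinearMap A.mulVecLin with hTclm
      refine ⟨‖Tclm‖ * max C2 0, fun x hx => ?_⟩
      obtain ⟨hx1, hx2⟩ := hx
      -- decompose the cube of x
      set cb : Fin m → ℝ := fun i => (x i) ^ 3 with hcb
      set k : Fin m → ℝ := (πk cb : Fin m → ℝ) with hk
      have hkmem : k ∈ LinearMap.ker A.mulVecLin := (πk cb).2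
      have hrmem : cb - k ∈ p := by
        have h1 : (πk cb : Fin m → ℝ) + (p.linearProjOfIsCompl _ hcompl.symm cb : Fin m → ℝ) = cb :=
          Submodule.projection_add_projection_eq_self hcompl cb
        have h2 : cb - k = (p.linearProjOfIsCompl _ hcompl.symm cb : Fin m → ℝ) := by
          rw [sub_eq_iff_eq_add']; exact h1.symm
        rw [h2]; exact (p.linearProjOfIsCompl _ hcompl.symm cb).2
      -- a preimage z of x lying in p
      obtain ⟨z0, hz0⟩ := hx1
      have hz0' : A.mulVec z0 = x := by simpa using hz0
      set z : Fin m → ℝ := z0 - (πk z0 : Fin m → ℝ) with hz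
      have hzp : z ∈ p := by
        have h1 : (πk z0 : Fin m → ℝ) + (p.linearProjOfIsCompl _ hcompl.symm z0 : Fin m → ℝ) = z0 :=
          Submodule.projection_add_projection_eq_self hcompl z0
        have h2 : z = (p.linearProjOfIsCompl _ hcompl.symm z0 : Fin m → ℝ) := by
          rw [hz, sub_eq_iff_eq_add']; exact h1.symm
        rw [h2]; exact (p.linearProjOfIsCompl _ hcompl.symm z0).2
      have h0k : A.mulVec k = 0 := by
        rw [← Matrix.mulVecLin_apply]; exact LinearMap.mem_ker.1 hkmem
      have h0z : A.mulVec ((πk z0 : Fin m → ℝ)) = 0 := by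
        rw [← Matrix.mulVecLin_apply]; exact LinearMap.mem_ker.1 (πk z0).2
      have hTz : A.mulVec z = x := by
        rw [hz, Matrix.mulVec_sub, hz0', h0z, sub_zero]
      set w : Fin m → ℝ := z - k with hw
      have hTw : A.mulVec w = x := by
        rw [hw, Matrix.mulVec_sub, hTz, h0k, sub_zero]
      -- F w lies in p and maps to G x under A
      have hFw : (w + fun i => (A.mulVec w i) ^ 3) = z + (cb - k) := by
        rw [hTw, hw]
        ext i
        simp [hcb]
        ring
      have hFwp : (w + fun i => (A.mulVec w i) ^ 3) ∈ p := by
        rw [hFw]; exact p.add_mem hzp hrmem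
      have hTFw : A.mulVec (w + fun i => (A.mulVec w i) ^ 3) =
          x + A.mulVec fun i => (x i) ^ 3 := by
        rw [hFw, Matrix.mulVec_add, hTz, Matrix.mulVec_sub, h0k, sub_zero]
      -- bound ‖F w‖ using antilipschitz on p
      have hnormFw : ‖w + fun i => (A.mulVec w i) ^ 3‖ ≤ R := by
        have hd := hanti.le_mul_dist ⟨_, hFwp⟩ 0
        rw [dist_zero_right, map_zero, dist_zero_right] at hd
        have hval : ‖(⟨w + fun i => (A.mulVec w i) ^ 3, hFwp⟩ : p)‖ =
            ‖w + fun i => (A.mulVec w i) ^ 3‖ := rfl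
        have hTpval : Tp ⟨w + fun i => (A.mulVec w i) ^ 3, hFwp⟩ =
            x + A.mulVec fun i => (x i) ^ 3 := by
          simpa [hTp, LinearMap.domRestrict_apply, Matrix.mulVecLin_apply] using hTFw
        rw [hTpval, hval] at hd
        calc ‖w + fun i => (A.mulVec w i) ^ 3‖
            ≤ (c : ℝ) * ‖x + A.mulVec fun i => (x i) ^ 3‖ := hd
          _ ≤ (c : ℝ) * C0 := by
              exact mul_le_mul_of_nonneg_left (hC0 _ hx2) (by positivity)
          _ ≤ R := le_max_left _ _
      -- hence w lies in the preimage of the closed ball, so it is bounded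
      have hwball : w ∈ (fun x => x + fun i => (A.mulVec x i) ^ 3) ⁻¹'
          Metric.closedBall 0 R := by
        simp only [Set.mem_preimage, Metric.mem_closedBall, dist_zero_right]
        exact hnormFw
      have hwnorm : ‖w‖ ≤ max C2 0 := le_trans (hC2 _ hwball) (le_max_left _ _)
      -- conclude
      calc ‖x‖ = ‖Tclm w‖ := by
            rw [hTclm]
            simp only [LinearMap.coe_toContinuousLinearMap', Matrix.mulVecLin_apply, hTw]
        _ ≤ ‖Tclm‖ * ‖w‖ := Tclm.le_opNorm w
        _ ≤ ‖Tclm‖ * max C2 0 :=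
            mul_le_mul_of_nonneg_left hwnorm (norm_nonneg _)
  · -- restriction proper → F_A proper
    intro h K hK
    rw [Metric.isCompact_iff_isClosed_bounded]
    refine ⟨hK.isClosed.preimage hF, ?_⟩
    have hK' : IsCompact ((fun v => A.mulVec v) '' K) := hK.image hTc
    obtain ⟨C1, hC1⟩ := (h _ hK').isBounded.exists_norm_le
    obtain ⟨C0, hC0⟩ := hK.isBounded.exists_norm_le
    rw [isBounded_iff_forall_norm_le]
    refine ⟨C0 + (max C1 0) ^ 3, fun x hx => ?_⟩
    have hxK : (x + fun i => (A.mulVec x i) ^ 3) ∈ K := hx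
    have hmem : A.mulVec x ∈ {y | y ∈ LinearMap.range A.mulVecLin ∧
        (y + A.mulVec fun i => (y i) ^ 3) ∈ (fun v => A.mulVec v) '' K} := by
      refine ⟨⟨x, by simp⟩, ⟨_, hxK, ?_⟩⟩
      have : A.mulVecLin (x + fun i => (A.mulVec x i) ^ 3) =
          A.mulVecLin x + A.mulVecLin (fun i => (A.mulVec x i) ^ 3) := map_add _ _ _
      simpa [Matrix.mulVecLin_apply] using this
    have hAx : ‖A.mulVec x‖ ≤ max C1 0 := le_trans (hC1 _ hmem) (le_max_left _ _)
    have hxeq : x = (x + fun i => (A.mulVec x i) ^ 3) - fun i => (A.mulVec x i) ^ 3 := by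
      ext i; simp
    calc ‖x‖ = ‖(x + fun i => (A.mulVec x i) ^ 3) - fun i => (A.mulVec x i) ^ 3‖ := by
          rw [← hxeq]
      _ ≤ ‖x + fun i => (A.mulVec x i) ^ 3‖ + ‖(fun i => (A.mulVec x i) ^ 3 : Fin m → ℝ)‖ :=
          norm_sub_le _ _
      _ ≤ C0 + (max C1 0) ^ 3 := add_le_add (hC0 _ hxK)
          (le_trans (hcube _) (pow_le_pow_left₀ (norm_nonneg _) hAx 3))
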